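/- arXiv:1905.00623 — 4 statements merged into one kernel-verified Lean document; each statement's English description precedes it below -/
import Mathlib

section
/- Let d ≥ 1 and let K : ℝ^d → [0,∞] be a measurable even kernel (K(x) = K(−x) for a.e. x) with ∫_{ℝ^d} min(1,|x|) K(x) dx < ∞. Given a unit vector n̂ ∈ S^{d−1}, define ζ(x,y) := sign((y−x)·n̂) and H := {x ∈ ℝ^d : x·n̂ > 0}. Then ζ is a nonlocal calibration for χ_H. -/
open MeasureTheory ENNReal Topology Filter RealInnerProductSpace

/-- Euclidean space `ℝ^d`. -/
abbrev Ed (d : ℕ) := EuclideanSpace ℝ (Fin d)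

/-- The nonlocal energy
`J_K(u；Ω) = (1/2)∫_Ω∫_Ω K(y−x)|u(y)−u(x)| dy dx + ∫_Ω∫_{Ω^c} K(y−x)|u(y)−u(x)| dy dx`. -/
noncomputable def JK {d : ℕ} (K : Ed d → ℝ≥0∞) (u : Ed d → ℝ) (Ω : Set (Ed d)) : ℝ≥0∞ :=
  (1 / 2) * ∫⁻ x in Ω, ∫⁻ y in Ω, K (y - x) * ENNReal.ofReal |u y - u x| +
    ∫⁻ x in Ω, ∫⁻ y in Ωᶜ, K (y - x) * ENNReal.ofReal |u y - u x|

/-- `ζ` is a nonlocal calibration for `u` (w.r.t. the kernel `K`): it is measurable,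
bounded by `1` a.e., it has vanishing nonlocal divergence, and it agrees with the sign of the
increments of `u`. -/
def IsCalibration {d : ℕ} (K : Ed d → ℝ≥0∞) (u : Ed d → ℝ) (ζ : Ed d × Ed d → ℝ) : Prop :=
  Measurable ζ ∧
  (∀ᵐ p ∂(volume : Measure (Ed d × Ed d)), |ζ p| ≤ 1) ∧
  (∀ᵐ x ∂(volume : Measure (Ed d)),
    Tendsto (fun r : ℝ =>
        ∫ y in (Metric.ball x r)ᶜ, (K (y - x)).toReal * (ζ (y, x) - ζ (x, y)))
      (𝓝[>] 0) (𝓝 0)) ∧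
  (∀ᵐ p ∂(volume : Measure (Ed d × Ed d)),
    u p.1 ≠ u p.2 → ζ p * (u p.2 - u p.1) = |u p.2 - u p.1|)

lemma measurable_realSign : Measurable Real.sign := by
  have h : Real.sign = fun r : ℝ => if r < 0 then (-1 : ℝ) else if 0 < r then 1 else 0 :=
    funext fun r => rfl
  rw [h]
  exact Measurable.ite (measurableSet_lt measurable_id measurable_const) measurable_const
    (Measurable.ite (measurableSet_lt measurable_const measurable_id) measurable_const
      measurable_const)

lemma abs_realSign_le_one (t : ℝ) : |Real.sign t| ≤ 1 := by
  rcases Real.sign_apply_eq t with h | h | h <;> rw [h] <;> norm_num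

/-- The field `ζ(x,y) = sign((y−x)·n̂)` is a nonlocal calibration for the halfspace
`H = {x : x·n̂ > 0}`. -/
theorem sign_is_calibration_for_halfspace
    {d : ℕ} (hd : 1 ≤ d)
    (K : Ed d → ℝ≥0∞) (hKmeas : Measurable K)
    (hKeven : ∀ᵐ x ∂(volume : Measure (Ed d)), K (-x) = K x)
    (hKsum : (∫⁻ x : Ed d, ENNReal.ofReal (min 1 ‖x‖) * K x) < ⊤)
    (n : Ed d) (hn : ‖n‖ = 1) :
    IsCalibration K
      ({x : Ed d | 0 < ⟪x, n⟫}.indicator (fun _ => (1 : ℝ)))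
      (fun p : Ed d × Ed d => Real.sign ⟪p.2 - p.1, n⟫) := by
  refine ⟨?_, ?_, ?_, ?_⟩
  · -- measurability
    exact measurable_realSign.comp
      ((continuous_snd.sub continuous_fst).inner continuous_const).measurable
  · -- bound by 1
    exact ae_of_all _ fun p => abs_realSign_le_one _
  · -- vanishing nonlocal divergence
    refine ae_of_all _ fun x => ?_
    have hzero : ∀ r : ℝ,
        (∫ y in (Metric.ball x r)ᶜ,
          (K (y - x)).toReal *
            ((fun p : Ed d × Ed d => Real.sign ⟪p.2 - p.1, n⟫) (y, x) -
             (fun p : Ed d × Ed d => Real.sign ⟪p.2 - p.1, n⟫) (x, y))) = 0 := by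
      intro r
      set f : Ed d → ℝ := fun y =>
        (K (y - x)).toReal * (Real.sign ⟪x - y, n⟫ - Real.sign ⟪y - x, n⟫) with hf
      set T : Ed d → Ed d := fun y => (x + x) - y with hT
      have hmp : MeasurePreserving T volume volume := Measure.measurePreserving_sub_left volume (x + x)
      have hemb : MeasurableEmbedding T :=
        (MeasurableEquiv.subLeft (x + x)).measurableEmbedding
      have hpre : T ⁻¹' ((Metric.ball x r)ᶜ) = (Metric.ball x r)ᶜ := by
        ext y
        simp only [Set.mem_preimage, Set.mem_compl_iff, Metric.mem_ball, hT]
        have : dist (x + x - y) x = dist y x := by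
          rw [dist_eq_norm, dist_eq_norm]
          have : x + x - y - x = -(y - x) := by abel
          rw [this, norm_neg]
        rw [this]
      have key : (∫ y in (Metric.ball x r)ᶜ, f y) = ∫ y in (Metric.ball x r)ᶜ, f (T y) := by
        conv_lhs => rw [← hmp.setIntegral_preimage_emb hemb f ((Metric.ball x r)ᶜ), hpre]
      have haeK : ∀ᵐ y ∂(volume : Measure (Ed d)), K (-(y - x)) = K (y - x) :=
        (measurePreserving_sub_right volume x).quasiMeasurePreserving.tendsto_ae.eventually hKeven
      have hodd : ∀ᵐ y ∂(volume : Measure (Ed d)), f (T y) = -f y := by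
        filter_upwards [haeK] with y hy
        have h1 : T y - x = -(y - x) := by simp only [hT]; abel
        have h2 : x - T y = y - x := by simp only [hT]; abel
        simp only [hf, h1, h2, hy]
        have h3 : Real.sign ⟪-(y - x), n⟫ = -Real.sign ⟪y - x, n⟫ := by
          rw [inner_neg_left, Real.sign_neg]
        have h4 : ⟪x - y, n⟫ = -⟪y - x, n⟫ := by
          rw [← inner_neg_left]; congr 1; abel
        rw [h3, h4, Real.sign_neg]
        ring
      have key2 : (∫ y in (Metric.ball x r)ᶜ, f (T y)) = ∫ y in (Metric.ball x r)ᶜ, (-f y) := by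
        refine integral_congr_ae (ae_restrict_of_ae ?_)
        filter_upwards [hodd] with y hy using hy
      have : (∫ y in (Metric.ball x r)ᶜ, f y) = -(∫ y in (Metric.ball x r)ᶜ, f y) := by
        exact (key.trans key2).trans (integral_neg f)
      have hI : (∫ y in (Metric.ball x r)ᶜ, f y) = 0 := by linarith
      simpa [hf] using hI
    have : (fun r : ℝ =>
        ∫ y in (Metric.ball x r)ᶜ,
          (K (y - x)).toReal *
            ((fun p : Ed d × Ed d => Real.sign ⟪p.2 - p.1, n⟫) (y, x) -
             (fun p : Ed d × Ed d => Real.sign ⟪p.2 - p.1, n⟫) (x, y))) = fun _ => (0 : ℝ) :=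
      funext hzero
    rw [this]
    exact tendsto_const_nhds
  · -- sign condition
    refine ae_of_all _ fun p hne => ?_
    set u := ({x : Ed d | 0 < ⟪x, n⟫}.indicator (fun _ => (1 : ℝ))) with hu
    by_cases h1 : 0 < ⟪p.1, n⟫ <;> by_cases h2 : 0 < ⟪p.2, n⟫
    · refine absurd ?_ hne
      have hu1 : u p.1 = 1 :=
        Set.indicator_of_mem (show p.1 ∈ {x : Ed d | 0 < ⟪x, n⟫} from h1) _
      have hu2 : u p.2 = 1 :=
        Set.indicator_of_mem (show p.2 ∈ {x : Ed d | 0 < ⟪x, n⟫} from h2) _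
      rw [hu1, hu2]
    · -- p.1 ∈ H, p.2 ∉ H
      have hu1 : u p.1 = 1 :=
        Set.indicator_of_mem (show p.1 ∈ {x : Ed d | 0 < ⟪x, n⟫} from h1) _
      have hu2 : u p.2 = 0 :=
        Set.indicator_of_notMem (show p.2 ∉ {x : Ed d | 0 < ⟪x, n⟫} from h2) _
      have hlt : ⟪p.2 - p.1, n⟫ < 0 := by
        rw [inner_sub_left]; push_neg at h2; linarith
      show Real.sign ⟪p.2 - p.1, n⟫ * (u p.2 - u p.1) = |u p.2 - u p.1|
      rw [hu1, hu2, Real.sign_of_neg hlt]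
      norm_num
    · -- p.1 ∉ H, p.2 ∈ H
      have hu1 : u p.1 = 0 :=
        Set.indicator_of_notMem (show p.1 ∉ {x : Ed d | 0 < ⟪x, n⟫} from h1) _
      have hu2 : u p.2 = 1 :=
        Set.indicator_of_mem (show p.2 ∈ {x : Ed d | 0 < ⟪x, n⟫} from h2) _
      have hlt : 0 < ⟪p.2 - p.1, n⟫ := by
        rw [inner_sub_left]; push_neg at h1; linarith
      show Real.sign ⟪p.2 - p.1, n⟫ * (u p.2 - u p.1) = |u p.2 - u p.1|
      rw [hu1, hu2, Real.sign_of_pos hlt]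
      norm_num
    · refine absurd ?_ hne
      have hu1 : u p.1 = 0 :=
        Set.indicator_of_notMem (show p.1 ∉ {x : Ed d | 0 < ⟪x, n⟫} from h1) _
      have hu2 : u p.2 = 0 :=
        Set.indicator_of_notMem (show p.2 ∉ {x : Ed d | 0 < ⟪x, n⟫} from h2) _
      rw [hu1, hu2]
end

section
/- Let d ≥ 1, let Ω ⊂ ℝ^d be Lebesgue measurable, and let K : ℝ^d → [0,∞] be a measurable kernel. For every measurable function u : ℝ^d → [0,1], the coarea-type formula J_K(u;Ω) = ∫₀¹ Per_K({x : u(x) > t}; Ω) dt holds. -/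
open MeasureTheory ENNReal Topology RealInnerProductSpace

/-- The nonlocal perimeter `Per_K(E；Ω) := J_K(χ_E；Ω)`. -/
noncomputable def PerK {d : ℕ} (K : Ed d → ℝ≥0∞) (E : Set (Ed d)) (Ω : Set (Ed d)) : ℝ≥0∞ :=
  JK K (E.indicator (fun _ => (1 : ℝ))) Ω

/-- Pointwise coarea identity: for `a, b ∈ [0,1]`,
`∫₀¹ |χ_{t<b} − χ_{t<a}| dt = |b − a|`. -/
lemma key_lintegral {a b : ℝ} (ha : a ∈ Set.Icc (0:ℝ) 1) (hb : b ∈ Set.Icc (0:ℝ) 1) :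
    ∫⁻ t in Set.Ioo (0:ℝ) 1,
      ENNReal.ofReal |(if t < b then (1:ℝ) else 0) - (if t < a then (1:ℝ) else 0)|
      = ENNReal.ofReal |b - a| := by
  have hpt : ∀ t : ℝ,
      ENNReal.ofReal |(if t < b then (1:ℝ) else 0) - (if t < a then (1:ℝ) else 0)|
        = (Set.Ico (min a b) (max a b)).indicator (fun _ => (1:ℝ≥0∞)) t := by
    intro t
    rcases lt_or_ge t a with h1 | h1 <;> rcases lt_or_ge t b with h2 | h2
    · rw [if_pos h2, if_pos h1, Set.indicator_of_notMem]
      · simp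
      · rw [Set.mem_Ico]; push_neg; intro h
        exact absurd h (not_le.2 (lt_min h1 h2))
    · rw [if_neg (not_lt.2 h2), if_pos h1, Set.indicator_of_mem]
      · norm_num
      · exact ⟨le_trans (min_le_right a b) h2, lt_of_lt_of_le h1 (le_max_left a b)⟩
    · rw [if_pos h2, if_neg (not_lt.2 h1), Set.indicator_of_mem]
      · norm_num
      · exact ⟨le_trans (min_le_left a b) h1, lt_of_lt_of_le h2 (le_max_right a b)⟩
    · rw [if_neg (not_lt.2 h2), if_neg (not_lt.2 h1), Set.indicator_of_notMem]
      · simp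
      · rw [Set.mem_Ico]; push_neg; intro _; exact max_le h1 h2
  simp_rw [hpt]
  rw [lintegral_indicator measurableSet_Ico, setLIntegral_one,
    Measure.restrict_apply measurableSet_Ico]
  have habs : |b - a| = max a b - min a b := (max_sub_min_eq_abs a b).symm
  rw [habs]
  apply le_antisymm
  · calc volume (Set.Ico (min a b) (max a b) ∩ Set.Ioo 0 1)
        ≤ volume (Set.Ico (min a b) (max a b)) := measure_mono Set.inter_subset_left
      _ = ENNReal.ofReal (max a b - min a b) := Real.volume_Ico
  · calc ENNReal.ofReal (max a b - min a b)
        = volume (Set.Ioo (min a b) (max a b)) := Real.volume_Ioo.symm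
      _ ≤ volume (Set.Ico (min a b) (max a b) ∩ Set.Ioo 0 1) := by
          refine measure_mono fun t ht => ?_
          exact ⟨⟨ht.1.le, ht.2⟩, lt_of_le_of_lt (le_min ha.1 hb.1) ht.1,
            lt_of_lt_of_le ht.2 (max_le ha.2 hb.2)⟩

/-- The coarea-type formula `J_K(u；Ω) = ∫₀¹ Per_K({u > t}；Ω) dt`. -/
theorem JK_coarea
    {d : ℕ} (hd : 1 ≤ d)
    (Ω : Set (Ed d)) (hΩ : MeasurableSet Ω)
    (K : Ed d → ℝ≥0∞) (hKmeas : Measurable K)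
    (u : Ed d → ℝ) (humeas : Measurable u)
    (hu01 : ∀ x, u x ∈ Set.Icc (0 : ℝ) 1) :
    JK K u Ω = ∫⁻ t in Set.Ioo (0 : ℝ) 1, PerK K {x | t < u x} Ω := by
  have hind : ∀ (t : ℝ) (y : Ed d),
      ({x | t < u x}).indicator (fun _ => (1:ℝ)) y = if t < u y then (1:ℝ) else 0 := by
    intro t y; simp [Set.indicator_apply]
  -- the fully uncurried integrand is measurable
  have hF : Measurable (fun p : (ℝ × Ed d) × Ed d =>
      K (p.2 - p.1.2) * ENNReal.ofReal
        |(if p.1.1 < u p.2 then (1:ℝ) else 0) - (if p.1.1 < u p.1.2 then (1:ℝ) else 0)|) := by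
    apply Measurable.mul
    · exact hKmeas.comp (measurable_snd.sub measurable_fst.snd)
    · apply ENNReal.measurable_ofReal.comp
      apply Measurable.abs
      apply Measurable.sub
      · exact Measurable.ite (measurableSet_lt measurable_fst.fst (humeas.comp measurable_snd))
          measurable_const measurable_const
      · exact Measurable.ite (measurableSet_lt measurable_fst.fst (humeas.comp measurable_fst.snd))
          measurable_const measurable_const
  -- the main Fubini-type computation, for any set `S` of `y`'s
  have main : ∀ S : Set (Ed d),
      (∫⁻ t in Set.Ioo (0:ℝ) 1, ∫⁻ x in Ω, ∫⁻ y in S,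
        K (y - x) * ENNReal.ofReal
          |(if t < u y then (1:ℝ) else 0) - (if t < u x then (1:ℝ) else 0)|)
      = ∫⁻ x in Ω, ∫⁻ y in S, K (y - x) * ENNReal.ofReal |u y - u x| := by
    intro S
    rw [lintegral_lintegral_swap
      (Measurable.lintegral_prod_right' (ν := volume.restrict S) hF).aemeasurable]
    refine lintegral_congr fun x => ?_
    have hFx : Measurable (fun p : ℝ × Ed d =>
        K (p.2 - x) * ENNReal.ofReal
          |(if p.1 < u p.2 then (1:ℝ) else 0) - (if p.1 < u x then (1:ℝ) else 0)|) := by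
      apply Measurable.mul
      · exact hKmeas.comp (measurable_snd.sub measurable_const)
      · apply ENNReal.measurable_ofReal.comp
        apply Measurable.abs
        apply Measurable.sub
        · exact Measurable.ite (measurableSet_lt measurable_fst (humeas.comp measurable_snd))
            measurable_const measurable_const
        · exact Measurable.ite (measurableSet_lt measurable_fst measurable_const)
            measurable_const measurable_const
    rw [lintegral_lintegral_swap hFx.aemeasurable]
    refine lintegral_congr fun y => ?_
    have hmt : Measurable (fun t : ℝ =>
        ENNReal.ofReal |(if t < u y then (1:ℝ) else 0) - (if t < u x then (1:ℝ) else 0)|) := by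
      apply ENNReal.measurable_ofReal.comp
      apply Measurable.abs
      exact (Measurable.ite measurableSet_Iio measurable_const measurable_const).sub
        (Measurable.ite measurableSet_Iio measurable_const measurable_const)
    rw [lintegral_const_mul _ hmt, key_lintegral (hu01 x) (hu01 y)]
  -- measurability of the inner double integrals as functions of `t`
  have hG : ∀ S : Set (Ed d), Measurable (fun t : ℝ => ∫⁻ x in Ω, ∫⁻ y in S,
      K (y - x) * ENNReal.ofReal
        |(if t < u y then (1:ℝ) else 0) - (if t < u x then (1:ℝ) else 0)|) := by
    intro S
    exact Measurable.lintegral_prod_right' (ν := volume.restrict Ω)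
      (Measurable.lintegral_prod_right' (ν := volume.restrict S) hF)
  -- NB: in `JK`, the `+` lies inside the innermost integral (the `∫⁻` notation
  -- extends maximally to the right), so we first flatten these integrals.
  have flatten : ∀ (f : Ed d → Ed d → ℝ≥0∞) (c : ℝ≥0∞),
      (∫⁻ x in Ω, ∫⁻ y in Ω, (f x y + c))
        = (∫⁻ x in Ω, ∫⁻ y in Ω, f x y) + c * (volume Ω * volume Ω) := by
    intro f c
    have h1 : ∀ x : Ed d, (∫⁻ y in Ω, (f x y + c)) = (∫⁻ y in Ω, f x y) + c * volume Ω := by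
      intro x
      rw [lintegral_add_right _ measurable_const, setLIntegral_const]
    simp_rw [h1]
    rw [lintegral_add_right _ measurable_const, setLIntegral_const]
    ring
  simp_rw [PerK, JK, hind, flatten]
  rw [lintegral_const_mul _ (by exact (hG Ω).add ((hG Ωᶜ).mul_const _))]
  congr 1
  rw [lintegral_add_left (hG Ω), main Ω, lintegral_mul_const _ (hG Ωᶜ), main Ωᶜ]
end

section
/- Let d ≥ 1, let Ω ⊂ ℝ^d be Lebesgue measurable, and let K : ℝ^d → [0,∞] be a measurable kernel. If u : ℝ^d → [0,1] is measurable with J_K(u;Ω) < ∞, then there exists t* ∈ (0,1) such that Per_K({x : u(x) > t*}; Ω) ≤ J_K(u; Ω). -/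
open MeasureTheory ENNReal Topology RealInnerProductSpace

/-- Set of (t,x,y) where the superlevel indicators at level t differ. -/
def Sdiff {d : ℕ} (u : Ed d → ℝ) : Set (ℝ × Ed d × Ed d) :=
  {p | (p.1 < u p.2.2 ∧ ¬ p.1 < u p.2.1) ∨ (p.1 < u p.2.1 ∧ ¬ p.1 < u p.2.2)}

lemma measurableSet_Sdiff {d : ℕ} {u : Ed d → ℝ} (hu : Measurable u) :
    MeasurableSet (Sdiff u) := by
  have h1 : MeasurableSet {p : ℝ × Ed d × Ed d | p.1 < u p.2.2} :=
    measurableSet_lt measurable_fst (hu.comp (measurable_snd.comp measurable_snd))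
  have h2 : MeasurableSet {p : ℝ × Ed d × Ed d | p.1 < u p.2.1} :=
    measurableSet_lt measurable_fst (hu.comp (measurable_fst.comp measurable_snd))
  exact (h1.inter h2.compl).union (h2.inter h1.compl)

lemma indicator_abs_eq {d : ℕ} (u : Ed d → ℝ) (t : ℝ) (x y : Ed d) :
    ENNReal.ofReal |Set.indicator {z | t < u z} (fun _ => (1:ℝ)) y -
      Set.indicator {z | t < u z} (fun _ => (1:ℝ)) x| =
    (Sdiff u).indicator (fun _ => (1:ℝ≥0∞)) (t, x, y) := by
  by_cases hx : t < u x <;> by_cases hy : t < u y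
  · simp [Sdiff, Set.indicator, hx, hy, not_le.mpr hx, not_le.mpr hy]
  · simp [Sdiff, Set.indicator, hx, hy, not_le.mpr hx, not_lt.mp hy]
  · simp [Sdiff, Set.indicator, hx, hy, not_lt.mp hx, not_le.mpr hy]
  · simp [Sdiff, Set.indicator, hx, hy]

lemma coarea_pt {d : ℕ} (u : Ed d → ℝ) (hu01 : ∀ z, u z ∈ Set.Icc (0:ℝ) 1) (x y : Ed d) :
    ∫⁻ t in Set.Ioo (0:ℝ) 1, (Sdiff u).indicator (fun _ => (1:ℝ≥0∞)) (t, x, y) =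
      ENNReal.ofReal |u y - u x| := by
  set a := u x with ha
  set b := u y with hb
  have hset : (fun t : ℝ => (Sdiff u).indicator (fun _ => (1:ℝ≥0∞)) (t, x, y)) =
      (Set.Ico (min a b) (max a b)).indicator (fun _ => (1:ℝ≥0∞)) := by
    funext t
    have hmem : ((t, x, y) ∈ Sdiff u) ↔ t ∈ Set.Ico (min a b) (max a b) := by
      simp only [Sdiff, Set.mem_setOf_eq, Set.mem_Ico, min_le_iff, lt_max_iff, not_lt, ← ha, ← hb]
      constructor
      · rintro (⟨h1, h2⟩ | ⟨h1, h2⟩)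
        · exact ⟨Or.inl h2, Or.inr h1⟩
        · exact ⟨Or.inr h2, Or.inl h1⟩
      · rintro ⟨h1 | h1, h2 | h2⟩
        · exact absurd (h1.trans_lt h2) (lt_irrefl _)
        · exact Or.inl ⟨h2, h1⟩
        · exact Or.inr ⟨h2, h1⟩
        · exact absurd (h1.trans_lt h2) (lt_irrefl _)
    classical
    rw [Set.indicator_apply, Set.indicator_apply]
    exact if_congr hmem rfl rfl
  rw [hset]
  have h1 : ∫⁻ t in Set.Ioo (0:ℝ) 1,
      (Set.Ico (min a b) (max a b)).indicator (fun _ => (1:ℝ≥0∞)) t =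
      (volume.restrict (Set.Ioo (0:ℝ) 1)) (Set.Ico (min a b) (max a b)) :=
    lintegral_indicator_one measurableSet_Ico
  rw [h1, Measure.restrict_apply measurableSet_Ico]
  have hm : 0 ≤ min a b := le_min (hu01 x).1 (hu01 y).1
  have hM : max a b ≤ 1 := max_le (hu01 x).2 (hu01 y).2
  have hvol : volume (Set.Ico (min a b) (max a b) ∩ Set.Ioo 0 1) =
      ENNReal.ofReal (max a b - min a b) := by
    apply le_antisymm
    · calc volume (Set.Ico (min a b) (max a b) ∩ Set.Ioo 0 1)
          ≤ volume (Set.Ico (min a b) (max a b)) := measure_mono Set.inter_subset_left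
        _ = ENNReal.ofReal (max a b - min a b) := Real.volume_Ico
    · calc ENNReal.ofReal (max a b - min a b)
          = volume (Set.Ioo (min a b) (max a b)) := Real.volume_Ioo.symm
        _ ≤ _ := measure_mono (by
            intro t ht
            simp only [Set.mem_Ioo, Set.mem_inter_iff, Set.mem_Ico] at *
            exact ⟨⟨le_of_lt ht.1, ht.2⟩, lt_of_le_of_lt hm ht.1, lt_of_lt_of_le ht.2 hM⟩)
  rw [hvol]
  congr 1
  exact max_sub_min_eq_abs a b

lemma measurable_Gfun {d : ℕ} {u : Ed d → ℝ} {K : Ed d → ℝ≥0∞}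
    (hu : Measurable u) (hK : Measurable K) :
    Measurable (fun p : ℝ × Ed d × Ed d =>
      K (p.2.2 - p.2.1) * (Sdiff u).indicator (fun _ => (1:ℝ≥0∞)) p) :=
  (hK.comp ((measurable_snd.comp measurable_snd).sub
      (measurable_fst.comp measurable_snd))).mul
    (measurable_const.indicator (measurableSet_Sdiff hu))

lemma meas_double {d : ℕ} {u : Ed d → ℝ} {K : Ed d → ℝ≥0∞}
    (hu : Measurable u) (hK : Measurable K) (S1 T : Set (Ed d)) :
    Measurable (fun t : ℝ => ∫⁻ x in S1, ∫⁻ y in T,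
      K (y - x) * (Sdiff u).indicator (fun _ => (1:ℝ≥0∞)) (t, x, y)) := by
  have hG := measurable_Gfun hu hK
  have hinner : Measurable (fun q : ℝ × Ed d => ∫⁻ y in T,
      K (y - q.2) * (Sdiff u).indicator (fun _ => (1:ℝ≥0∞)) (q.1, q.2, y)) := by
    apply Measurable.lintegral_prod_right'
      (f := fun p : (ℝ × Ed d) × Ed d =>
        K (p.2 - p.1.2) * (Sdiff u).indicator (fun _ => (1:ℝ≥0∞)) (p.1.1, p.1.2, p.2))
    exact hG.comp ((measurable_fst.comp measurable_fst).prodMk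
      ((measurable_snd.comp measurable_fst).prodMk measurable_snd))
  exact hinner.lintegral_prod_right'

lemma coarea_total {d : ℕ} {u : Ed d → ℝ} {K : Ed d → ℝ≥0∞}
    (hu : Measurable u) (hu01 : ∀ z, u z ∈ Set.Icc (0:ℝ) 1) (hK : Measurable K)
    (S1 T : Set (Ed d)) :
    ∫⁻ t in Set.Ioo (0:ℝ) 1, ∫⁻ x in S1, ∫⁻ y in T,
        K (y - x) * (Sdiff u).indicator (fun _ => (1:ℝ≥0∞)) (t, x, y) =
      ∫⁻ x in S1, ∫⁻ y in T, K (y - x) * ENNReal.ofReal |u y - u x| := by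
  have hG := measurable_Gfun hu hK
  have hinner : Measurable (fun q : ℝ × Ed d => ∫⁻ y in T,
      K (y - q.2) * (Sdiff u).indicator (fun _ => (1:ℝ≥0∞)) (q.1, q.2, y)) := by
    apply Measurable.lintegral_prod_right'
      (f := fun p : (ℝ × Ed d) × Ed d =>
        K (p.2 - p.1.2) * (Sdiff u).indicator (fun _ => (1:ℝ≥0∞)) (p.1.1, p.1.2, p.2))
    exact hG.comp ((measurable_fst.comp measurable_fst).prodMk
      ((measurable_snd.comp measurable_fst).prodMk measurable_snd))
  rw [lintegral_lintegral_swap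
    (f := fun t x => ∫⁻ y in T,
      K (y - x) * (Sdiff u).indicator (fun _ => (1:ℝ≥0∞)) (t, x, y))
    hinner.aemeasurable]
  refine lintegral_congr fun x => ?_
  rw [lintegral_lintegral_swap
    (f := fun t y => K (y - x) * (Sdiff u).indicator (fun _ => (1:ℝ≥0∞)) (t, x, y))
    ((hG.comp (measurable_fst.prodMk
      (measurable_const.prodMk measurable_snd))).aemeasurable)]
  refine lintegral_congr fun y => ?_
  have hmt : Measurable (fun t : ℝ =>
      (Sdiff u).indicator (fun _ => (1:ℝ≥0∞)) (t, x, y)) :=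
    (measurable_const.indicator (measurableSet_Sdiff hu)).comp
      (measurable_id.prodMk measurable_const)
  rw [lintegral_const_mul _ hmt, coarea_pt u hu01 x y]

lemma JK_split {d : ℕ} (K : Ed d → ℝ≥0∞) (v : Ed d → ℝ) (Ω : Set (Ed d)) :
    JK K v Ω = (1 / 2) *
      ((∫⁻ x in Ω, ∫⁻ y in Ω, K (y - x) * ENNReal.ofReal |v y - v x|) +
        ((∫⁻ x in Ω, ∫⁻ y in Ωᶜ, K (y - x) * ENNReal.ofReal |v y - v x|) *
          volume Ω) * volume Ω) := by
  unfold JK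
  congr 1
  have h1 : ∀ x : Ed d, (∫⁻ y in Ω, (K (y - x) * ENNReal.ofReal |v y - v x| +
      ∫⁻ x' in Ω, ∫⁻ y' in Ωᶜ, K (y' - x') * ENNReal.ofReal |v y' - v x'|)) =
      (∫⁻ y in Ω, K (y - x) * ENNReal.ofReal |v y - v x|) +
        (∫⁻ x' in Ω, ∫⁻ y' in Ωᶜ, K (y' - x') * ENNReal.ofReal |v y' - v x'|) * volume Ω := by
    intro x
    rw [lintegral_add_right _ measurable_const, lintegral_const, Measure.restrict_apply_univ]
  rw [lintegral_congr h1, lintegral_add_right _ measurable_const, lintegral_const,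
    Measure.restrict_apply_univ]

/-- Some superlevel set of a finite-energy competitor has nonlocal perimeter bounded by the
energy of the competitor. -/
theorem exists_superlevel_perimeter_le
    {d : ℕ} (hd : 1 ≤ d)
    (Ω : Set (Ed d)) (hΩ : MeasurableSet Ω)
    (K : Ed d → ℝ≥0∞) (hKmeas : Measurable K)
    (u : Ed d → ℝ) (humeas : Measurable u)
    (hu01 : ∀ x, u x ∈ Set.Icc (0 : ℝ) 1)
    (hufin : JK K u Ω < ⊤) :
    ∃ t ∈ Set.Ioo (0 : ℝ) 1, PerK K {x | t < u x} Ω ≤ JK K u Ω := by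
  set I := Set.Ioo (0:ℝ) 1 with hI
  have hPer : ∀ t : ℝ, PerK K {x | t < u x} Ω =
      (1/2) * ((∫⁻ x in Ω, ∫⁻ y in Ω,
          K (y - x) * (Sdiff u).indicator (fun _ => (1:ℝ≥0∞)) (t, x, y)) +
        ((∫⁻ x in Ω, ∫⁻ y in Ωᶜ,
          K (y - x) * (Sdiff u).indicator (fun _ => (1:ℝ≥0∞)) (t, x, y)) *
            volume Ω) * volume Ω) := by
    intro t
    unfold PerK
    rw [JK_split]
    simp_rw [indicator_abs_eq u t]
  have hA := meas_double humeas hKmeas Ω Ω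
  have hB := meas_double humeas hKmeas Ω Ωᶜ
  have hg : Measurable (fun t : ℝ => PerK K {x | t < u x} Ω) := by
    have : (fun t : ℝ => PerK K {x | t < u x} Ω) = fun t =>
        (1/2) * ((∫⁻ x in Ω, ∫⁻ y in Ω,
            K (y - x) * (Sdiff u).indicator (fun _ => (1:ℝ≥0∞)) (t, x, y)) +
          ((∫⁻ x in Ω, ∫⁻ y in Ωᶜ,
            K (y - x) * (Sdiff u).indicator (fun _ => (1:ℝ≥0∞)) (t, x, y)) *
              volume Ω) * volume Ω) := funext hPer
    rw [this]
    exact ((hA.add ((hB.mul_const _).mul_const _)).const_mul _)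
  have key : ∫⁻ t in I, PerK K {x | t < u x} Ω = JK K u Ω := by
    rw [lintegral_congr fun t => hPer t,
      lintegral_const_mul _ (hA.fun_add ((hB.mul_const _).mul_const _)),
      lintegral_add_left hA, lintegral_mul_const _ (hB.mul_const _),
      lintegral_mul_const _ hB,
      coarea_total humeas hu01 hKmeas Ω Ω, coarea_total humeas hu01 hKmeas Ω Ωᶜ]
    exact (JK_split K u Ω).symm
  have huniv : (volume.restrict I) Set.univ = 1 := by
    rw [Measure.restrict_apply_univ, hI, Real.volume_Ioo]
    norm_num
  by_contra hcon
  push_neg at hcon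
  have hμ : volume.restrict I ≠ 0 := by
    intro h0
    rw [h0] at huniv
    simp at huniv
  have hconst : ∫⁻ _t in I, JK K u Ω = JK K u Ω := by
    rw [lintegral_const, huniv, mul_one]
  have hstrict : ∫⁻ _t in I, JK K u Ω < ∫⁻ t in I, PerK K {x | t < u x} Ω :=
    lintegral_strict_mono hμ hg.aemeasurable (by rw [hconst]; exact hufin.ne)
      ((ae_restrict_iff' measurableSet_Ioo).mpr (Filter.Eventually.of_forall hcon))
  rw [hconst, key] at hstrict
  exact lt_irrefl _ hstrict
end

section
/- Let d ≥ 1, let Ω ⊂ ℝ^d be Lebesgue measurable, let K : ℝ^d → [0,∞] be a measurable kernel, and let E₀ ⊂ ℝ^d be measurable with J_K(χ_{E₀};Ω) < ∞. Let F be the class of measurable functions v : ℝ^d → [0,1] with v = χ_{E₀} a.e. in Ω^c. If u ∈ F satisfies J_K(u;Ω) ≤ J_K(v;Ω) for all v ∈ F, then there exists t* ∈ (0,1) such that the characteristic function of the superlevel set {x : u(x) > t*} belongs to F and is also a minimiser of J_K(·;Ω) over F. -/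
open MeasureTheory ENNReal Topology RealInnerProductSpace

noncomputable def slmInd (t a : ℝ) : ℝ := if t < a then 1 else 0

lemma slm_measurable_ind : Measurable fun p : ℝ × ℝ => slmInd p.1 p.2 := by
  unfold slmInd
  exact Measurable.ite (measurableSet_lt measurable_fst measurable_snd)
    measurable_const measurable_const

lemma slm_meas_layer (a b : ℝ) :
    Measurable fun t => ENNReal.ofReal |slmInd t b - slmInd t a| := by
  have h1 : Measurable fun t : ℝ => slmInd t b :=
    slm_measurable_ind.comp (measurable_id.prodMk measurable_const)
  have h2 : Measurable fun t : ℝ => slmInd t a :=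
    slm_measurable_ind.comp (measurable_id.prodMk measurable_const)
  exact ((h1.sub h2).abs).ennreal_ofReal

lemma slm_layer_le (a b : ℝ) (ha : 0 ≤ a) (hab : a ≤ b) (hb : b ≤ 1) :
    ∫⁻ t in Set.Ioo (0:ℝ) 1, ENNReal.ofReal |slmInd t b - slmInd t a|
      = ENNReal.ofReal (b - a) := by
  have hpt : ∀ t : ℝ, ENNReal.ofReal |slmInd t b - slmInd t a|
      = Set.indicator (Set.Ico a b) (fun _ => (1:ℝ≥0∞)) t := by
    intro t
    unfold slmInd
    rcases lt_or_ge t a with h1 | h1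
    · have h2 : t < b := lt_of_lt_of_le h1 hab
      simp [h1, h2, Set.indicator_apply, Set.mem_Ico, not_le.2 h1]
    · rcases lt_or_ge t b with h2 | h2
      · simp [not_lt.2 h1, h2, Set.indicator_apply, Set.mem_Ico, h1]
      · simp [not_lt.2 h1, not_lt.2 h2, Set.indicator_apply, Set.mem_Ico]
  simp only [hpt]
  rw [lintegral_indicator measurableSet_Ico, setLIntegral_one,
    Measure.restrict_apply measurableSet_Ico]
  apply le_antisymm
  · calc volume (Set.Ico a b ∩ Set.Ioo 0 1) ≤ volume (Set.Ico a b) :=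
        measure_mono Set.inter_subset_left
      _ = ENNReal.ofReal (b - a) := Real.volume_Ico
  · calc ENNReal.ofReal (b - a) = volume (Set.Ioo a b) := Real.volume_Ioo.symm
      _ ≤ volume (Set.Ico a b ∩ Set.Ioo 0 1) :=
          measure_mono fun t ht => ⟨⟨le_of_lt ht.1, ht.2⟩,
            lt_of_le_of_lt ha ht.1, lt_of_lt_of_le ht.2 hb⟩

lemma slm_layer (a b : ℝ) (ha : a ∈ Set.Icc (0:ℝ) 1) (hb : b ∈ Set.Icc (0:ℝ) 1) :
    ∫⁻ t in Set.Ioo (0:ℝ) 1, ENNReal.ofReal |slmInd t b - slmInd t a|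
      = ENNReal.ofReal |b - a| := by
  rcases le_total a b with h | h
  · rw [abs_of_nonneg (sub_nonneg.2 h)]
    exact slm_layer_le a b ha.1 h hb.2
  · rw [abs_sub_comm, abs_of_nonneg (sub_nonneg.2 h)]
    have hsymm : ∀ t : ℝ, ENNReal.ofReal |slmInd t b - slmInd t a|
        = ENNReal.ofReal |slmInd t a - slmInd t b| := by
      intro t; rw [abs_sub_comm]
    simp only [hsymm]
    exact slm_layer_le b a hb.1 h ha.2

lemma slm_measurable_f {d : ℕ} {K : Ed d → ℝ≥0∞} {u : Ed d → ℝ}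
    (hK : Measurable K) (hu : Measurable u) :
    Measurable fun p : ℝ × Ed d × Ed d =>
      K (p.2.2 - p.2.1) * ENNReal.ofReal |slmInd p.1 (u p.2.2) - slmInd p.1 (u p.2.1)| := by
  have h1 : Measurable fun p : ℝ × Ed d × Ed d => slmInd p.1 (u p.2.2) :=
    slm_measurable_ind.comp (measurable_fst.prodMk (hu.comp measurable_snd.snd))
  have h2 : Measurable fun p : ℝ × Ed d × Ed d => slmInd p.1 (u p.2.1) :=
    slm_measurable_ind.comp (measurable_fst.prodMk (hu.comp measurable_snd.fst))
  exact (hK.comp (measurable_snd.snd.sub measurable_snd.fst)).mul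
    (((h1.sub h2).abs).ennreal_ofReal)

lemma slm_coarea {d : ℕ} {K : Ed d → ℝ≥0∞} {u : Ed d → ℝ}
    (hK : Measurable K) (hu : Measurable u) (hu01 : ∀ x, u x ∈ Set.Icc (0:ℝ) 1)
    (A B : Set (Ed d)) :
    ∫⁻ t in Set.Ioo (0:ℝ) 1, ∫⁻ x in A, ∫⁻ y in B,
        K (y - x) * ENNReal.ofReal |slmInd t (u y) - slmInd t (u x)|
      = ∫⁻ x in A, ∫⁻ y in B, K (y - x) * ENNReal.ofReal |u y - u x| := by
  have hf := slm_measurable_f hK hu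
  have hswap1 :
      ∫⁻ t in Set.Ioo (0:ℝ) 1, ∫⁻ x in A, (∫⁻ y in B,
          K (y - x) * ENNReal.ofReal |slmInd t (u y) - slmInd t (u x)|)
        = ∫⁻ x in A, ∫⁻ t in Set.Ioo (0:ℝ) 1, ∫⁻ y in B,
          K (y - x) * ENNReal.ofReal |slmInd t (u y) - slmInd t (u x)| := by
    refine MeasureTheory.lintegral_lintegral_swap (Measurable.aemeasurable ?_)
    have hm : Measurable fun p : (ℝ × Ed d) × Ed d =>
        K (p.2 - p.1.2) * ENNReal.ofReal |slmInd p.1.1 (u p.2) - slmInd p.1.1 (u p.1.2)| :=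
      hf.comp (measurable_fst.fst.prodMk (measurable_fst.snd.prodMk measurable_snd))
    exact hm.lintegral_prod_right'
  rw [hswap1]
  refine lintegral_congr fun x => ?_
  have hswap2 :
      ∫⁻ t in Set.Ioo (0:ℝ) 1, ∫⁻ y in B,
          K (y - x) * ENNReal.ofReal |slmInd t (u y) - slmInd t (u x)|
        = ∫⁻ y in B, ∫⁻ t in Set.Ioo (0:ℝ) 1,
          K (y - x) * ENNReal.ofReal |slmInd t (u y) - slmInd t (u x)| := by
    refine MeasureTheory.lintegral_lintegral_swap (Measurable.aemeasurable ?_)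
    exact hf.comp (measurable_fst.prodMk (measurable_const.prodMk measurable_snd))
  rw [hswap2]
  refine lintegral_congr fun y => ?_
  rw [lintegral_const_mul _ (slm_meas_layer (u x) (u y)),
    slm_layer (u x) (u y) (hu01 x) (hu01 y)]

lemma slm_meas_double {d : ℕ} {K : Ed d → ℝ≥0∞} {u : Ed d → ℝ}
    (hK : Measurable K) (hu : Measurable u) (A B : Set (Ed d)) :
    Measurable fun t : ℝ => ∫⁻ x in A, ∫⁻ y in B,
      K (y - x) * ENNReal.ofReal |slmInd t (u y) - slmInd t (u x)| := by
  have h1 : Measurable fun p : ℝ × Ed d => ∫⁻ y in B,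
      K (y - p.2) * ENNReal.ofReal |slmInd p.1 (u y) - slmInd p.1 (u p.2)| := by
    have hm : Measurable fun p : (ℝ × Ed d) × Ed d =>
        K (p.2 - p.1.2) * ENNReal.ofReal |slmInd p.1.1 (u p.2) - slmInd p.1.1 (u p.1.2)| :=
      (slm_measurable_f hK hu).comp
        (measurable_fst.fst.prodMk (measurable_fst.snd.prodMk measurable_snd))
    exact hm.lintegral_prod_right'
  exact h1.lintegral_prod_right'

lemma slm_JK_decomp {d : ℕ} (K : Ed d → ℝ≥0∞) (Ω : Set (Ed d)) (w : Ed d → ℝ) :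
    JK K w Ω = (1/2) * ((∫⁻ x in Ω, ∫⁻ y in Ω, K (y - x) * ENNReal.ofReal |w y - w x|) +
      (∫⁻ x in Ω, ∫⁻ y in Ωᶜ, K (y - x) * ENNReal.ofReal |w y - w x|) * volume Ω * volume Ω) := by
  unfold JK
  set B := ∫⁻ x in Ω, ∫⁻ y in Ωᶜ, K (y - x) * ENNReal.ofReal |w y - w x| with hB
  have h1 : ∀ x : Ed d, ∫⁻ y in Ω, (K (y - x) * ENNReal.ofReal |w y - w x| + B)
      = (∫⁻ y in Ω, K (y - x) * ENNReal.ofReal |w y - w x|) + B * volume Ω := by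
    intro x
    rw [lintegral_add_right _ measurable_const, setLIntegral_const]
  rw [lintegral_congr h1, lintegral_add_right _ measurable_const, setLIntegral_const,
    mul_assoc]

/-- If `u` minimises the nonlocal Plateau problem, then the characteristic function of one of
its superlevel sets is an admissible competitor which is also a minimiser. -/
theorem exists_superlevel_minimiser
    {d : ℕ} (hd : 1 ≤ d)
    (Ω : Set (Ed d)) (hΩ : MeasurableSet Ω)
    (K : Ed d → ℝ≥0∞) (hKmeas : Measurable K)
    (E₀ : Set (Ed d)) (hE₀ : MeasurableSet E₀)
    (hE₀fin : JK K (E₀.indicator (fun _ => (1 : ℝ))) Ω < ⊤)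
    (u : Ed d → ℝ) (humeas : Measurable u)
    (hu01 : ∀ x, u x ∈ Set.Icc (0 : ℝ) 1)
    (hubc : ∀ᵐ x ∂(volume : Measure (Ed d)),
      x ∈ Ωᶜ → u x = (E₀.indicator (fun _ => (1 : ℝ))) x)
    (humin : ∀ v : Ed d → ℝ, Measurable v → (∀ x, v x ∈ Set.Icc (0 : ℝ) 1) →
      (∀ᵐ x ∂(volume : Measure (Ed d)),
        x ∈ Ωᶜ → v x = (E₀.indicator (fun _ => (1 : ℝ))) x) →
      JK K u Ω ≤ JK K v Ω) :
    ∃ t ∈ Set.Ioo (0 : ℝ) 1,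
      (∀ᵐ x ∂(volume : Measure (Ed d)),
        x ∈ Ωᶜ → ({x | t < u x}.indicator (fun _ => (1 : ℝ))) x
          = (E₀.indicator (fun _ => (1 : ℝ))) x) ∧
      (∀ v : Ed d → ℝ, Measurable v → (∀ x, v x ∈ Set.Icc (0 : ℝ) 1) →
        (∀ᵐ x ∂(volume : Measure (Ed d)),
          x ∈ Ωᶜ → v x = (E₀.indicator (fun _ => (1 : ℝ))) x) →
        JK K ({x | t < u x}.indicator (fun _ => (1 : ℝ))) Ω ≤ JK K v Ω) := by
  have hχmeas : Measurable (E₀.indicator (fun _ => (1 : ℝ))) :=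
    measurable_const.indicator hE₀
  have hχ01 : ∀ x, (E₀.indicator (fun _ => (1 : ℝ))) x ∈ Set.Icc (0:ℝ) 1 := by
    intro x; by_cases h : x ∈ E₀ <;> simp [Set.indicator_apply, h]
  have hcfin : JK K u Ω < ⊤ :=
    lt_of_le_of_lt (humin _ hχmeas hχ01 (Filter.Eventually.of_forall fun x _ => rfl)) hE₀fin
  set m : ℝ≥0∞ := volume Ω * volume Ω with hm
  set D1 : ℝ → ℝ≥0∞ := fun t => ∫⁻ x in Ω, ∫⁻ y in Ω,
      K (y - x) * ENNReal.ofReal |slmInd t (u y) - slmInd t (u x)| with hD1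
  set D2 : ℝ → ℝ≥0∞ := fun t => ∫⁻ x in Ω, ∫⁻ y in Ωᶜ,
      K (y - x) * ENNReal.ofReal |slmInd t (u y) - slmInd t (u x)| with hD2
  have hφeq : ∀ t : ℝ, JK K ({x | t < u x}.indicator (fun _ => (1 : ℝ))) Ω
      = (1/2) * (D1 t + D2 t * m) := by
    intro t
    have hpt : ∀ x y : Ed d,
        ENNReal.ofReal |({x | t < u x}.indicator (fun _ => (1:ℝ))) y
            - ({x | t < u x}.indicator (fun _ => (1:ℝ))) x|
          = ENNReal.ofReal |slmInd t (u y) - slmInd t (u x)| := by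
      intro x y
      unfold slmInd
      by_cases hy : t < u y <;> by_cases hx : t < u x <;>
        simp [Set.indicator_apply, hx, hy]
    rw [slm_JK_decomp]
    simp only [hpt, hD1, hD2, hm]
    rw [mul_assoc]
  have hD1meas := slm_meas_double hKmeas humeas Ω Ω
  have hD2meas := slm_meas_double hKmeas humeas Ω Ωᶜ
  have hψmeas : Measurable fun t => (1/2) * (D1 t + D2 t * m) :=
    ((hD1meas.add (hD2meas.mul_const m)).const_mul _)
  have hint : ∫⁻ t in Set.Ioo (0:ℝ) 1, (1/2) * (D1 t + D2 t * m) = JK K u Ω := by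
    rw [lintegral_const_mul _ (show Measurable fun t => D1 t + D2 t * m from
        hD1meas.add (hD2meas.mul_const m)),
      lintegral_add_left (show Measurable D1 from hD1meas),
      lintegral_mul_const _ (show Measurable D2 from hD2meas)]
    simp only [hD1, hD2]
    rw [slm_coarea hKmeas humeas hu01 Ω Ω, slm_coarea hKmeas humeas hu01 Ω Ωᶜ,
      slm_JK_decomp K Ω u, hm, mul_assoc]
  have hex : ∃ t ∈ Set.Ioo (0:ℝ) 1, (1/2) * (D1 t + D2 t * m) ≤ JK K u Ω := by
    by_contra h
    push_neg at h
    have hμ : (volume : Measure ℝ).restrict (Set.Ioo 0 1) ≠ 0 := by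
      rw [Ne, Measure.restrict_eq_zero, Real.volume_Ioo]
      simp
    have hlt : ∀ᵐ t ∂((volume : Measure ℝ).restrict (Set.Ioo 0 1)),
        JK K u Ω < (1/2) * (D1 t + D2 t * m) :=
      (ae_restrict_iff' measurableSet_Ioo).2 (Filter.Eventually.of_forall h)
    have hfi : ∫⁻ _ : ℝ, JK K u Ω ∂((volume : Measure ℝ).restrict (Set.Ioo 0 1)) ≠ ⊤ := by
      rw [lintegral_const, Measure.restrict_apply_univ, Real.volume_Ioo]
      simp [hcfin.ne]
    have hst := lintegral_strict_mono hμ hψmeas.aemeasurable hfi hlt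
    rw [hint, lintegral_const, Measure.restrict_apply_univ, Real.volume_Ioo] at hst
    simp at hst
  obtain ⟨t, ht, hφt⟩ := hex
  refine ⟨t, ht, ?_, ?_⟩
  · filter_upwards [hubc] with x hx hxmem
    have h1 := hx hxmem
    by_cases hEx : x ∈ E₀
    · have hux : u x = 1 := by simpa [Set.indicator_of_mem hEx] using h1
      simp [Set.indicator_apply, hEx, hux, ht.2]
    · have hux : u x = 0 := by simpa [Set.indicator_of_notMem hEx] using h1
      simp [Set.indicator_apply, hEx, hux, not_lt.2 (le_of_lt ht.1)]
  · intro v hv hv01 hvbc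
    calc JK K ({x | t < u x}.indicator (fun _ => (1 : ℝ))) Ω
        = (1/2) * (D1 t + D2 t * m) := hφeq t
      _ ≤ JK K u Ω := hφt
      _ ≤ JK K v Ω := humin v hv hv01 hvbc
end
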